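/- arXiv:1806.03269 — 2 statements merged into one kernel-verified Lean document; each statement's English description precedes it below -/
import Mathlib

section
/- Let 0 < α < 1 and let m be a positive integer with mα > 1. Define a_n = 2(−1)^n + (−2)^n and z(t) = ∑_{n=m+1}^∞ a_n t^{αn} / Γ(αn + 1). Then z(0) = 0, lim_{t→0⁺} D^α z(t) = 0, and for every t > 0 the twice-iterated Caputo derivative of z satisfies D^α(D^α z)(t) + 3 D^α z(t) + 2 z(t) = F(t), where F(t) = −(2 a_{m−1} + 3 a_m) t^{(m−1)α} / Γ((m−1)α + 1) − 2 a_m t^{mα} / Γ(mα + 1). -/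
/-- The Caputo fractional derivative of order `α` (for `0 < α < 1`) with base point `0`. -/
noncomputable def caputoDeriv (α : ℝ) (y : ℝ → ℝ) : ℝ → ℝ :=
  fun t => (1 / Real.Gamma (1 - α)) * ∫ ξ in (0 : ℝ)..t, (t - ξ) ^ (-α) * deriv y ξ

open Real MeasureTheory Set Filter intervalIntegral

lemma gamma_ge (x : ℝ) (hx : 1 ≤ x) : Real.exp (-1) ≤ Real.Gamma x := by
  have h0 : (0:ℝ) < x := by linarith
  rw [Real.Gamma_eq_integral h0]
  have hint : IntegrableOn (fun t : ℝ => Real.exp (-t) * t ^ (x - 1)) (Ioi 0) :=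
    Real.GammaIntegral_convergent h0
  have hexp : IntegrableOn (fun t : ℝ => Real.exp (-t)) (Ioi 1) := by
    simpa only [neg_mul, one_mul] using exp_neg_integrableOn_Ioi 1 one_pos
  have h1 : (Real.exp (-1) : ℝ) = ∫ t in Ioi (1:ℝ), Real.exp (-t) :=
    (integral_exp_neg_Ioi 1).symm
  rw [h1]
  have step1 : (∫ t in Ioi (1:ℝ), Real.exp (-t)) ≤
      ∫ t in Ioi (1:ℝ), Real.exp (-t) * t ^ (x - 1) := by
    refine setIntegral_mono_on hexp
      (hint.mono_set (Ioi_subset_Ioi one_pos.le)) measurableSet_Ioi ?_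
    intro t ht
    have ht1 : (1:ℝ) ≤ t := le_of_lt ht
    nlinarith [Real.one_le_rpow ht1 (by linarith : (0:ℝ) ≤ x - 1),
      Real.exp_pos (-t)]
  refine step1.trans ?_
  refine setIntegral_mono_set hint ?_ ?_
  · filter_upwards [ae_restrict_mem measurableSet_Ioi] with t ht
    exact mul_nonneg (Real.exp_pos _).le (Real.rpow_nonneg (le_of_lt ht) _)
  · exact (Ioi_subset_Ioi one_pos.le).eventuallyLE

lemma fact_le_gamma : ∀ (k : ℕ) (x : ℝ), (k : ℝ) ≤ x →
    (k.factorial : ℝ) * Real.exp (-1) ≤ Real.Gamma (x + 1) := by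
  intro k
  induction k with
  | zero => intro x hx; simpa using gamma_ge (x+1) (by push_cast at hx; linarith)
  | succ k ih =>
    intro x hx
    have hk : (k:ℝ) + 1 ≤ x := by push_cast at hx; linarith
    have hx0 : (0:ℝ) < x := by
      have : (0:ℝ) ≤ (k:ℝ) := Nat.cast_nonneg k
      linarith
    rw [Real.Gamma_add_one hx0.ne']
    have h2 : (k.factorial : ℝ) * Real.exp (-1) ≤ Real.Gamma ((x - 1) + 1) :=
      ih (x-1) (by linarith)
    rw [show x - 1 + 1 = x by ring] at h2
    calc ((k+1).factorial : ℝ) * Real.exp (-1)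
        = ((k:ℝ)+1) * ((k.factorial : ℝ) * Real.exp (-1)) := by
          push_cast [Nat.factorial_succ]; ring
      _ ≤ x * ((k.factorial : ℝ) * Real.exp (-1)) := by
          have h3 : (0:ℝ) ≤ (k.factorial : ℝ) * Real.exp (-1) := by positivity
          nlinarith
      _ ≤ x * Real.Gamma x := by nlinarith


lemma gamma_pos_arg (β c : ℝ) (hβ : 0 ≤ β) (hc : 1 ≤ c) (n : ℕ) :
    0 < Real.Gamma (β * n + c) := by
  apply Real.Gamma_pos_of_pos
  have h1 : (0:ℝ) ≤ β * n := by positivity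
  linarith

lemma summable_master (β c b : ℝ) (hβ : 0 < β) (hc : 1 ≤ c) (hb : 0 ≤ b) :
    Summable (fun n : ℕ => b ^ n / Real.Gamma (β * n + c)) := by
  obtain ⟨M, hM⟩ : ∃ M : ℕ, 2 * (b + 1) ≤ ((M:ℝ) + 1) ^ β := by
    have h := (tendsto_rpow_atTop hβ).comp
      (tendsto_atTop_add_const_right atTop (1:ℝ) tendsto_natCast_atTop_atTop)
    exact (h.eventually_ge_atTop (2*(b+1))).exists
  set R : ℝ := ((M:ℝ) + 1) ^ β with hR
  have hM0 : (0:ℝ) ≤ (M:ℝ) := Nat.cast_nonneg M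
  have hR1 : (1:ℝ) ≤ (M:ℝ) + 1 := by linarith
  have hRpos : 0 < R := Real.rpow_pos_of_pos (by linarith) β
  have hbR : b / R ≤ 1/2 := by
    rw [div_le_div_iff₀ hRpos two_pos]; linarith
  obtain ⟨N, hN⟩ : ∃ N : ℕ, (M:ℝ) + 1 ≤ β * N := by
    obtain ⟨N, hN⟩ := (tendsto_natCast_atTop_atTop (R := ℝ)).eventually_ge_atTop
      (((M:ℝ)+1)/β) |>.exists
    exact ⟨N, by rw [div_le_iff₀ hβ] at hN; linarith⟩
  rw [← summable_nat_add_iff N]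
  set C : ℝ := b ^ N * Real.exp 1 * ((M:ℝ)+1) / (M.factorial : ℝ) with hC
  have key : ∀ n : ℕ, b ^ (n + N) / Real.Gamma (β * (↑(n + N)) + c) ≤ C * (b / R) ^ n := by
    intro n
    set x : ℝ := β * (↑(n + N)) + c - 1 with hx
    set j : ℕ := ⌊(n:ℝ) * β⌋₊ with hj
    have hn0 : (0:ℝ) ≤ (n:ℝ) := Nat.cast_nonneg n
    have hjle : (j:ℝ) ≤ (n:ℝ) * β := Nat.floor_le (by positivity)
    have hjgt : (n:ℝ) * β - 1 ≤ (j:ℝ) := by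
      have := Nat.lt_floor_add_one ((n:ℝ) * β); linarith
    have hkx : ((M + j : ℕ):ℝ) ≤ x := by
      push_cast [hx]
      nlinarith [hN]
    have h1 : (((M+j).factorial:ℝ)) * Real.exp (-1) ≤ Real.Gamma (x + 1) :=
      fact_le_gamma (M+j) x hkx
    have h2 : ((M.factorial : ℝ)) * ((M:ℝ)+1)^(j:ℕ) ≤ ((M+j).factorial : ℝ) := by
      exact_mod_cast Nat.cast_le.mpr (Nat.factorial_mul_pow_le_factorial)
    have h3 : ((M:ℝ)+1) ^ ((n:ℝ)*β - 1) ≤ ((M:ℝ)+1)^(j:ℕ) := by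
      rw [← Real.rpow_natCast ((M:ℝ)+1) j]
      exact Real.rpow_le_rpow_of_exponent_le hR1 hjgt
    have h4 : ((M:ℝ)+1) ^ ((n:ℝ)*β - 1) = R ^ n / ((M:ℝ)+1) := by
      rw [Real.rpow_sub (by linarith), Real.rpow_one]
      congr 1
      rw [hR, ← Real.rpow_natCast (((M:ℝ)+1) ^ β) n, ← Real.rpow_mul (by linarith)]
      ring_nf
    have hxG : Real.Gamma (β * (↑(n + N)) + c) = Real.Gamma (x + 1) := by
      rw [hx]; ring_nf
    have hL : Real.exp (-1) * (M.factorial : ℝ) * (R ^ n / ((M:ℝ)+1)) ≤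
        Real.Gamma (β * (↑(n + N)) + c) := by
      rw [hxG]
      calc Real.exp (-1) * (M.factorial : ℝ) * (R ^ n / ((M:ℝ)+1))
          = (M.factorial : ℝ) * ((M:ℝ)+1)^((n:ℝ)*β - 1) * Real.exp (-1) := by
            rw [h4]; ring
        _ ≤ ((M+j).factorial : ℝ) * Real.exp (-1) := by
            have hstep : (M.factorial : ℝ) * ((M:ℝ)+1)^((n:ℝ)*β - 1) ≤
                ((M+j).factorial : ℝ) :=
              le_trans (mul_le_mul_of_nonneg_left h3 (Nat.cast_nonneg _)) h2
            exact mul_le_mul_of_nonneg_right hstep (Real.exp_pos _).le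
        _ ≤ Real.Gamma (x + 1) := h1
    have hLpos : 0 < Real.exp (-1) * (M.factorial : ℝ) * (R ^ n / ((M:ℝ)+1)) := by
      have : (0:ℝ) < (M.factorial : ℝ) := by exact_mod_cast M.factorial_pos
      positivity
    calc b ^ (n + N) / Real.Gamma (β * (↑(n + N)) + c)
        ≤ b ^ (n + N) / (Real.exp (-1) * (M.factorial : ℝ) * (R ^ n / ((M:ℝ)+1))) :=
          div_le_div_of_nonneg_left (pow_nonneg hb _) hLpos hL |>.trans_eq rfl |>.trans le_rfl
          |>.trans le_rfl
      _ = C * (b / R) ^ n := by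
          rw [hC, pow_add, div_pow, Real.exp_neg]
          have hfp : (0:ℝ) < (M.factorial : ℝ) := by exact_mod_cast M.factorial_pos
          field_simp
  apply Summable.of_nonneg_of_le _ key
  · exact (Summable.mul_left C
      (summable_geometric_of_lt_one (by positivity) (hbR.trans_lt one_half_lt_one)))
  · intro n
    exact div_nonneg (pow_nonneg hb _) (gamma_pos_arg β c hβ.le hc (n+N)).le

lemma beta_integrable (α γ t : ℝ) (hα0 : 0 < α) (hα1 : α < 1) (hγ : 1 ≤ γ) (ht : 0 < t) :
    IntervalIntegrable (fun ξ => (t - ξ) ^ (-α) * ξ ^ (γ - 1)) volume 0 t := by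
  have h1 : IntervalIntegrable (fun ξ : ℝ => ξ ^ (-α)) volume 0 t :=
    intervalIntegral.intervalIntegrable_rpow' (by linarith)
  have h2 : IntervalIntegrable (fun ξ : ℝ => (t - ξ) ^ (-α)) volume 0 t := by
    have := (h1.comp_sub_left t).symm
    simpa using this
  refine h2.mul_continuousOn ?_
  intro x _
  exact (Real.continuousAt_rpow_const x (γ-1) (Or.inr (by linarith))).continuousWithinAt

lemma beta_value (α γ t : ℝ) (hα0 : 0 < α) (hα1 : α < 1) (hγ : 1 ≤ γ) (ht : 0 < t) :
    ∫ ξ in (0:ℝ)..t, (t - ξ) ^ (-α) * ξ ^ (γ - 1) =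
      Real.Gamma γ * Real.Gamma (1 - α) / Real.Gamma (γ + (1 - α)) * t ^ (γ - α) := by
  have hγ0 : (0:ℝ) < γ := by linarith
  have h1α : (0:ℝ) < 1 - α := by linarith
  set u : ℂ := (γ : ℂ) with hu
  set v : ℂ := ((1 - α : ℝ) : ℂ) with hv
  have hΓuv : Complex.Gamma (u + v) ≠ 0 := by
    rw [show u + v = ((γ + (1 - α) : ℝ) : ℂ) by push_cast [hu, hv]; ring,
      Complex.Gamma_ofReal]
    exact_mod_cast (Real.Gamma_pos_of_pos (by linarith)).ne'
  have hbeta : Complex.betaIntegral u v =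
      Complex.Gamma u * Complex.Gamma v / Complex.Gamma (u + v) := by
    rw [eq_div_iff hΓuv]
    rw [Complex.Gamma_mul_Gamma_eq_betaIntegral (by simp [hu]; exact hγ0)
      (by simp [hv]; linarith)]
    ring
  have hscaled := Complex.betaIntegral_scaled u v ht
  have hid : (((∫ ξ in (0:ℝ)..t, (t - ξ) ^ (-α) * ξ ^ (γ - 1)) : ℝ) : ℂ) =
      ∫ x in (0:ℝ)..t, (x : ℂ) ^ (u - 1) * ((t : ℂ) - x) ^ (v - 1) := by
    rw [← intervalIntegral.integral_ofReal]
    refine intervalIntegral.integral_congr ?_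
    intro x hx
    rw [uIcc_of_le ht.le] at hx
    have hx0 : (0:ℝ) ≤ x := hx.1
    have hxt : (0:ℝ) ≤ t - x := by linarith [hx.2]
    have e1 : ((x ^ (γ - 1) : ℝ) : ℂ) = (x:ℂ) ^ (u - 1) := by
      rw [Complex.ofReal_cpow hx0]
      congr 1
      push_cast [hu]; ring
    have e2 : (((t - x) ^ (-α) : ℝ) : ℂ) = ((t:ℂ) - x) ^ (v - 1) := by
      rw [Complex.ofReal_cpow hxt]
      rw [show ((t - x : ℝ) : ℂ) = (t:ℂ) - x by push_cast; ring]
      congr 1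
      push_cast [hv]; ring
    show (((t - x) ^ (-α) * x ^ (γ - 1) : ℝ) : ℂ) = _
    push_cast [← e1, ← e2]
    ring
  have hrhs : ((t:ℂ)) ^ (u + v - 1) * Complex.betaIntegral u v =
      (((Real.Gamma γ * Real.Gamma (1 - α) / Real.Gamma (γ + (1 - α)) * t ^ (γ - α)) : ℝ) : ℂ) := by
    rw [hbeta]
    rw [show u + v - 1 = ((γ - α : ℝ) : ℂ) by push_cast [hu, hv]; ring]
    rw [← Complex.ofReal_cpow ht.le]
    rw [show u + v = ((γ + (1 - α) : ℝ) : ℂ) by push_cast [hu, hv]; ring]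
    rw [hv, Complex.Gamma_ofReal, Complex.Gamma_ofReal, Complex.Gamma_ofReal]
    push_cast
    ring
  have := hid.trans (hscaled.trans hrhs)
  exact_mod_cast this

lemma gamma_pos_arg' (α E : ℝ) (hα0 : 0 ≤ α) (hE : 0 ≤ E) (k : ℕ) :
    0 < Real.Gamma (E + α * k + 1) := by
  have := gamma_pos_arg α (E + 1) hα0 (by linarith) k
  rw [show α * k + (E + 1) = E + α * k + 1 by ring] at this
  exact this

lemma summable_pow_aux (α E : ℝ) (hα0 : 0 < α) (hE : 0 ≤ E) (c : ℕ → ℝ) (A : ℝ)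
    (hA : ∀ k, |c k| ≤ A * 2 ^ k) (s : ℝ) (hs : 0 < s) :
    Summable (fun k : ℕ => c k * s ^ (E + α * k) / Real.Gamma (E + α * k + 1)) := by
  refine Summable.of_norm_bounded
    ((summable_master α (E + 1) (2 * s ^ α) hα0 (by linarith) (by positivity)).mul_left
      (A * s ^ E)) ?_
  intro k
  have hΓ : 0 < Real.Gamma (E + α * k + 1) := gamma_pos_arg' α E hα0.le hE k
  have hsp : 0 < s ^ (E + α * k) := Real.rpow_pos_of_pos hs _
  have hsplit : s ^ (E + α * k) = s ^ E * (s ^ α) ^ k := by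
    rw [Real.rpow_add hs, ← Real.rpow_natCast (s ^ α) k, ← Real.rpow_mul hs.le]
  have harg : Real.Gamma (α * k + (E + 1)) = Real.Gamma (E + α * k + 1) := by ring_nf
  calc ‖c k * s ^ (E + α * k) / Real.Gamma (E + α * k + 1)‖
      = |c k| * s ^ (E + α * k) / Real.Gamma (E + α * k + 1) := by
        rw [Real.norm_eq_abs, abs_div, abs_mul, abs_of_pos hsp, abs_of_pos hΓ]
    _ ≤ (A * 2 ^ k) * s ^ (E + α * k) / Real.Gamma (E + α * k + 1) := by
        gcongr; exact hA k
    _ = (A * s ^ E) * ((2 * s ^ α) ^ k / Real.Gamma (α * k + (E + 1))) := by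
        rw [harg, hsplit, mul_pow]; ring

set_option maxHeartbeats 1000000 in
lemma caputo_tsum (α e₀ : ℝ) (hα0 : 0 < α) (hα1 : α < 1) (he : 1 < e₀)
    (c : ℕ → ℝ) (A : ℝ) (hA : ∀ k, |c k| ≤ A * 2 ^ k) (t : ℝ) (ht : 0 < t) :
    caputoDeriv α
        (fun s => ∑' k : ℕ, c k * s ^ (e₀ + α * k) / Real.Gamma (e₀ + α * k + 1)) t
      = ∑' k : ℕ, c k * t ^ ((e₀ - α) + α * k) / Real.Gamma ((e₀ - α) + α * k + 1) := by
  have hA0 : 0 ≤ A := by have := (abs_nonneg (c 0)).trans (hA 0); simpa using this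
  set R : ℝ := t + 1 with hR
  have hR1 : (1:ℝ) < R := by simp [hR]; linarith
  have hRpos : (0:ℝ) < R := by linarith
  set S : Set ℝ := Ioo (0:ℝ) R with hS
  set g' : ℕ → ℝ → ℝ := fun k s =>
    c k * ((e₀ + α * k) * s ^ ((e₀ + α * k) - 1)) / Real.Gamma ((e₀ + α * k) + 1) with hg'
  set u : ℕ → ℝ := fun k =>
    (A * (e₀ + α) * R ^ (e₀ - 1)) * ((4 * R ^ α) ^ k / Real.Gamma (α * k + (e₀ + 1))) with hu
  have hΓpos : ∀ k : ℕ, 0 < Real.Gamma ((e₀ + α * k) + 1) := by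
    intro k
    have := gamma_pos_arg' α e₀ hα0.le (by linarith) k
    rw [show e₀ + α * k + 1 = (e₀ + α * k) + 1 by ring] at this
    exact this
  have husum : Summable u :=
    (summable_master α (e₀ + 1) (4 * R ^ α) hα0 (by linarith) (by positivity)).mul_left _
  have hderiv : ∀ (k : ℕ) (y : ℝ), y ∈ S → HasDerivAt
      (fun s => c k * s ^ (e₀ + α * k) / Real.Gamma (e₀ + α * k + 1)) (g' k y) y := by
    intro k y hy
    exact ((Real.hasDerivAt_rpow_const (p := e₀ + α * k)
      (Or.inl (ne_of_gt hy.1))).const_mul (c k)).div_const _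
  have hbound : ∀ (k : ℕ) (y : ℝ), y ∈ S → ‖g' k y‖ ≤ u k := by
    intro k y hy
    have hy0 : 0 < y := hy.1
    have hyR : y ≤ R := hy.2.le
    have hγpos : 0 < e₀ + α * k := by positivity
    have hexp0 : (0:ℝ) ≤ e₀ + α * k - 1 := by
      have h9 : (0:ℝ) ≤ α * k := by positivity
      linarith
    have h2k : ((k:ℝ) + 1) ≤ 2 ^ k := by
      exact_mod_cast Nat.succ_le_of_lt ((Nat.lt_two_pow_self (n := k)))
    have hγle : e₀ + α * k ≤ (e₀ + α) * 2 ^ k := by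
      have h1 : e₀ + α * k ≤ (e₀ + α) * ((k:ℝ) + 1) := by nlinarith
      have h2 : (e₀ + α) * ((k:ℝ)+1) ≤ (e₀ + α) * 2 ^ k := by nlinarith
      linarith
    have hyle : y ^ (e₀ + α * k - 1) ≤ R ^ (e₀ - 1) * (R ^ α) ^ k := by
      have h1 : y ^ (e₀ + α * k - 1) ≤ R ^ (e₀ + α * k - 1) :=
        Real.rpow_le_rpow hy0.le hyR hexp0
      have h2 : R ^ (e₀ + α * k - 1) = R ^ (e₀ - 1) * (R ^ α) ^ k := by
        rw [show e₀ + α * k - 1 = (e₀ - 1) + α * k by ring, Real.rpow_add hRpos,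
          ← Real.rpow_natCast (R ^ α) k, ← Real.rpow_mul hRpos.le]
      linarith [h1, h2.le, h2.ge]
    have hyp : 0 < y ^ (e₀ + α * k - 1) := Real.rpow_pos_of_pos hy0 _
    calc ‖g' k y‖ = |c k| * ((e₀ + α * k) * y ^ (e₀ + α * k - 1)) /
          Real.Gamma ((e₀ + α * k) + 1) := by
          rw [hg']
          rw [Real.norm_eq_abs, abs_div, abs_mul, abs_of_pos (mul_pos hγpos hyp),
            abs_of_pos (hΓpos k)]
      _ ≤ (A * 2 ^ k) * (((e₀ + α) * 2 ^ k) * (R ^ (e₀ - 1) * (R ^ α) ^ k)) /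
          Real.Gamma ((e₀ + α * k) + 1) := by
          apply div_le_div_of_nonneg_right ?_ (hΓpos k).le |>.trans_eq rfl
          exact mul_le_mul (hA k) (mul_le_mul hγle hyle hyp.le (by positivity))
            (by positivity) (by positivity)
      _ = u k := by
          simp only [hu]
          rw [show Real.Gamma (α * k + (e₀ + 1)) = Real.Gamma ((e₀ + α * k) + 1) by ring_nf]
          rw [show (4:ℝ) = 2 * 2 by norm_num, mul_pow (2*2:ℝ), mul_pow (2:ℝ)]
          ring
  have htS : t ∈ S := by constructor <;> [linarith; simp [hR]]
  have hg0 : Summable (fun k : ℕ => c k * t ^ (e₀ + α * k) / Real.Gamma (e₀ + α * k + 1)) :=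
    summable_pow_aux α e₀ hα0 (by linarith) c A hA t ht
  have hG : ∀ ξ ∈ S, HasDerivAt
      (fun s => ∑' k : ℕ, c k * s ^ (e₀ + α * k) / Real.Gamma (e₀ + α * k + 1))
      (∑' k, g' k ξ) ξ := by
    intro ξ hξ
    exact hasDerivAt_tsum_of_isPreconnected husum isOpen_Ioo isPreconnected_Ioo
      hderiv hbound htS hg0 hξ
  -- second half: compute the integral
  have hΓ1α : 0 < Real.Gamma (1 - α) := Real.Gamma_pos_of_pos (by linarith)
  have hγ1 : ∀ k : ℕ, (1:ℝ) ≤ e₀ + α * k := by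
    intro k
    have h9 : (0:ℝ) ≤ α * k := by positivity
    linarith
  have hγpos : ∀ k : ℕ, (0:ℝ) < e₀ + α * k := fun k => lt_of_lt_of_le one_pos (hγ1 k)
  have hfun : ∀ k : ℕ, (fun ξ => (t - ξ) ^ (-α) * g' k ξ) =
      fun ξ => (c k * (e₀ + α * k) / Real.Gamma ((e₀ + α * k) + 1)) *
        ((t - ξ) ^ (-α) * ξ ^ ((e₀ + α * k) - 1)) := by
    intro k; funext ξ; simp only [hg']; ring
  have hint_k : ∀ k : ℕ, IntegrableOn (fun ξ => (t - ξ) ^ (-α) * g' k ξ) (Ioc 0 t) volume := by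
    intro k
    rw [hfun k]
    exact ((intervalIntegrable_iff_integrableOn_Ioc_of_le ht.le).mp
      (beta_integrable α (e₀ + α * k) t hα0 hα1 (hγ1 k) ht)).const_mul _
  have hbase : ∀ k : ℕ, ∫ ξ in Ioc 0 t, (t - ξ) ^ (-α) * ξ ^ ((e₀ + α * k) - 1) =
      Real.Gamma (e₀ + α * k) * Real.Gamma (1 - α) /
        Real.Gamma ((e₀ + α * k) + (1 - α)) * t ^ ((e₀ + α * k) - α) := by
    intro k
    rw [← intervalIntegral.integral_of_le ht.le]
    exact beta_value α (e₀ + α * k) t hα0 hα1 (hγ1 k) ht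
  have hGadd : ∀ k : ℕ, Real.Gamma ((e₀ + α * k) + 1) =
      (e₀ + α * k) * Real.Gamma (e₀ + α * k) := fun k =>
    Real.Gamma_add_one (hγpos k).ne'
  have hΓγpos : ∀ k : ℕ, 0 < Real.Gamma (e₀ + α * k) :=
    fun k => Real.Gamma_pos_of_pos (hγpos k)
  have hΓshift : ∀ k : ℕ, Real.Gamma ((e₀ + α * k) + (1 - α)) =
      Real.Gamma ((e₀ - α) + α * k + 1) := by intro k; ring_nf
  have hΓspos : ∀ k : ℕ, 0 < Real.Gamma ((e₀ - α) + α * k + 1) :=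
    fun k => gamma_pos_arg' α (e₀ - α) hα0.le (by linarith) k
  have hvals : ∀ k : ℕ, ∫ ξ in Ioc 0 t, (t - ξ) ^ (-α) * g' k ξ =
      c k * (Real.Gamma (1 - α) * t ^ ((e₀ - α) + α * k)) /
        Real.Gamma ((e₀ - α) + α * k + 1) := by
    intro k
    rw [hfun k, MeasureTheory.integral_const_mul, hbase k, hGadd k, hΓshift k,
      show (e₀ + α * k) - α = (e₀ - α) + α * k by ring]
    have := (hγpos k).ne'
    have := (hΓγpos k).ne'
    have := (hΓspos k).ne'
    field_simp
  have hnorm : ∀ k : ℕ, ∫ ξ in Ioc 0 t, ‖(t - ξ) ^ (-α) * g' k ξ‖ =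
      |c k| * (Real.Gamma (1 - α) * t ^ ((e₀ - α) + α * k)) /
        Real.Gamma ((e₀ - α) + α * k + 1) := by
    intro k
    have habs : ∀ ξ ∈ Ioc (0:ℝ) t, ‖(t - ξ) ^ (-α) * g' k ξ‖ =
        (|c k| * (e₀ + α * k) / Real.Gamma ((e₀ + α * k) + 1)) *
          ((t - ξ) ^ (-α) * ξ ^ ((e₀ + α * k) - 1)) := by
      intro ξ hξ
      have h1 : (0:ℝ) ≤ (t - ξ) ^ (-α) := Real.rpow_nonneg (by linarith [hξ.2]) _
      have h2 : (0:ℝ) < ξ ^ ((e₀ + α * k) - 1) := Real.rpow_pos_of_pos hξ.1 _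
      simp only [hg', Real.norm_eq_abs, abs_mul, abs_div,
        abs_of_nonneg h1, abs_of_pos h2, abs_of_pos (hγpos k), abs_of_pos (hΓpos k)]
      ring
    rw [setIntegral_congr_fun measurableSet_Ioc habs, MeasureTheory.integral_const_mul,
      hbase k, hGadd k, hΓshift k, show (e₀ + α * k) - α = (e₀ - α) + α * k by ring]
    have := (hγpos k).ne'
    have := (hΓγpos k).ne'
    have := (hΓspos k).ne'
    field_simp
  have hsum_norm : Summable (fun k : ℕ => ∫ ξ in Ioc 0 t, ‖(t - ξ) ^ (-α) * g' k ξ‖) := by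
    refine Summable.congr (f := fun k => Real.Gamma (1 - α) *
      (|c k| * t ^ ((e₀ - α) + α * k) / Real.Gamma ((e₀ - α) + α * k + 1))) ?_ ?_
    · exact (summable_pow_aux α (e₀ - α) hα0 (by linarith) (fun k => |c k|) A
        (fun k => by rw [abs_abs]; exact hA k) t ht).mul_left _
    · intro k; rw [hnorm k]; ring
  -- assemble
  show (1 / Real.Gamma (1 - α)) * (∫ ξ in (0:ℝ)..t, (t - ξ) ^ (-α) *
      deriv (fun s => ∑' k : ℕ, c k * s ^ (e₀ + α * k) / Real.Gamma (e₀ + α * k + 1)) ξ) = _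
  rw [intervalIntegral.integral_of_le ht.le]
  rw [setIntegral_congr_fun measurableSet_Ioc (fun ξ hξ => by
    have hξS : ξ ∈ S := ⟨hξ.1, lt_of_le_of_lt hξ.2 (by simp [hR])⟩
    rw [(hG ξ hξS).deriv, ← tsum_mul_left])]
  rw [← MeasureTheory.integral_tsum_of_summable_integral_norm (fun k => hint_k k) hsum_norm]
  rw [show (∑' k : ℕ, ∫ ξ in Ioc 0 t, (t - ξ) ^ (-α) * g' k ξ) =
      ∑' k : ℕ, c k * (Real.Gamma (1 - α) * t ^ ((e₀ - α) + α * k)) /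
        Real.Gamma ((e₀ - α) + α * k + 1) from tsum_congr hvals]
  rw [← tsum_mul_left]
  refine tsum_congr fun k => ?_
  have := (hΓspos k).ne'
  field_simp

set_option maxHeartbeats 1000000 in
/-- With `aₙ = 2(−1)ⁿ + (−2)ⁿ`, the tail `z(t) = ∑_{n=m+1}^∞ aₙ t^{αn}/Γ(αn+1)` satisfies
`z(0) = 0`, `D^α z(t) → 0` as `t → 0⁺`, and for every `t > 0`
`D^α(D^α z)(t) + 3D^α z(t) + 2z(t) = F(t)`, where
`F(t) = −(2a_{m−1} + 3a_m) t^{(m−1)α}/Γ((m−1)α+1) − 2a_m t^{mα}/Γ(mα+1)`. -/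
theorem three_term_tail_equation (α : ℝ) (m : ℕ)
    (hα0 : 0 < α) (hα1 : α < 1) (hm : 0 < m) (hmα : 1 < m * α)
    (a : ℕ → ℝ) (ha : ∀ n : ℕ, a n = 2 * (-1 : ℝ) ^ n + (-2 : ℝ) ^ n)
    (z : ℝ → ℝ)
    (hz : ∀ t : ℝ, z t = ∑' k : ℕ,
      a (m + 1 + k) * t ^ (α * ((m : ℝ) + 1 + k)) /
        Real.Gamma (α * ((m : ℝ) + 1 + k) + 1))
    (F : ℝ → ℝ)
    (hF : ∀ t : ℝ, F t =
      -(2 * a (m - 1) + 3 * a m) * t ^ (α * ((m : ℝ) - 1)) /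
          Real.Gamma (α * ((m : ℝ) - 1) + 1) -
        2 * a m * t ^ (α * m) / Real.Gamma (α * m + 1)) :
    z 0 = 0 ∧
    Filter.Tendsto (fun t => caputoDeriv α z t) (nhdsWithin 0 (Set.Ioi 0)) (nhds 0) ∧
    ∀ t : ℝ, 0 < t →
      caputoDeriv α (caputoDeriv α z) t + 3 * caputoDeriv α z t + 2 * z t = F t := by
  have hmR : (1:ℝ) ≤ (m:ℝ) := by exact_mod_cast hm
  have hE0 : 1 < α * (m:ℝ) := by rw [mul_comm]; exact hmα
  -- coefficient bound
  have ha_bound : ∀ n : ℕ, |a n| ≤ 3 * 2 ^ n := by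
    intro n
    rw [ha n]
    have h1 : |2 * (-1:ℝ)^n| = 2 := by
      rw [abs_mul, abs_pow, abs_neg, abs_one, one_pow]; norm_num
    have h2 : |(-2:ℝ)^n| = 2^n := by rw [abs_pow, abs_neg]; norm_num
    have h3 : (1:ℝ) ≤ 2^n := one_le_pow₀ (by norm_num)
    calc |2 * (-1:ℝ)^n + (-2:ℝ)^n| ≤ |2 * (-1:ℝ)^n| + |(-2:ℝ)^n| := abs_add_le _ _
      _ = 2 + 2^n := by rw [h1, h2]
      _ ≤ 3 * 2^n := by linarith
  set A : ℝ := 3 * 2 ^ (m+1) with hA_def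
  have hA : ∀ k : ℕ, |a (m + 1 + k)| ≤ A * 2 ^ k := by
    intro k
    calc |a (m+1+k)| ≤ 3 * 2 ^ (m+1+k) := ha_bound _
      _ = A * 2 ^ k := by rw [hA_def, pow_add]; ring
  have harec : ∀ n : ℕ, a (n + 2) = -3 * a (n + 1) - 2 * a n := by
    intro n
    simp only [ha, pow_succ]
    ring
  -- z in standard form
  set E1 : ℝ := α * ((m:ℝ) + 1) with hE1_def
  set E0 : ℝ := α * (m:ℝ) with hE0_def
  have hE1 : 1 < E1 := by rw [hE1_def]; nlinarith
  have hzfun : z = fun s => ∑' k : ℕ,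
      a (m+1+k) * s ^ (E1 + α * k) / Real.Gamma (E1 + α * k + 1) := by
    funext s
    rw [hz s]
    refine tsum_congr fun k => ?_
    rw [show α * ((m : ℝ) + 1 + (k:ℝ)) = E1 + α * (k:ℝ) by rw [hE1_def]; ring]
  -- part 1 : z 0 = 0
  have hz0 : z 0 = 0 := by
    rw [hz 0]
    have h0 : ∀ k : ℕ, a (m+1+k) * (0:ℝ) ^ (α * ((m : ℝ) + 1 + k)) /
        Real.Gamma (α * ((m : ℝ) + 1 + k) + 1) = 0 := by
      intro k
      have hp : (0:ℝ) < α * ((m : ℝ) + 1 + k) := by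
        have : (0:ℝ) < (m:ℝ) + 1 + k := by positivity
        exact mul_pos hα0 this
      rw [Real.zero_rpow hp.ne']
      simp
    rw [tsum_congr h0, tsum_zero]
  -- the function g = D^α z on (0,∞)
  set g : ℝ → ℝ := fun s => ∑' k : ℕ,
      a (m+1+k) * s ^ (E0 + α * k) / Real.Gamma (E0 + α * k + 1) with hg_def
  have H1 : ∀ s : ℝ, 0 < s → caputoDeriv α z s = g s := by
    intro s hs
    rw [hzfun, caputo_tsum α E1 hα0 hα1 hE1 _ A hA s hs, hg_def]
    exact tsum_congr fun k => by
      rw [show E1 - α + α * (k:ℝ) = E0 + α * (k:ℝ) by rw [hE1_def, hE0_def]; ring]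
  have H2 : ∀ s : ℝ, 0 < s → caputoDeriv α g s =
      ∑' k : ℕ, a (m+1+k) * s ^ ((E0 - α) + α * k) /
        Real.Gamma ((E0 - α) + α * k + 1) := by
    intro s hs
    rw [hg_def]
    exact caputo_tsum α E0 hα0 hα1 hE0 _ A hA s hs
  refine ⟨hz0, ?_, ?_⟩
  · -- tendsto
    have hE0pos : (0:ℝ) < E0 := by linarith
    have hMsum : Summable (fun k : ℕ => |a (m+1+k)| * (1:ℝ) ^ (E0 + α * k) /
        Real.Gamma (E0 + α * k + 1)) :=
      summable_pow_aux α E0 hα0 (by linarith) _ A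
        (fun k => by rw [abs_abs]; exact hA k) 1 one_pos
    set M : ℝ := ∑' k : ℕ, |a (m+1+k)| * (1:ℝ) ^ (E0 + α * k) /
        Real.Gamma (E0 + α * k + 1) with hM_def
    have hbound : ∀ t : ℝ, t ∈ Ioc (0:ℝ) 1 → ‖caputoDeriv α z t‖ ≤ t ^ E0 * M := by
      intro t htt
      rw [H1 t htt.1]
      have hsum_t : Summable (fun k : ℕ => |a (m+1+k)| * t ^ (E0 + α * k) /
          Real.Gamma (E0 + α * k + 1)) :=
        summable_pow_aux α E0 hα0 (by linarith) _ A
          (fun k => by rw [abs_abs]; exact hA k) t htt.1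
      have hn : Summable (fun k : ℕ => ‖a (m+1+k) * t ^ (E0 + α * k) /
          Real.Gamma (E0 + α * k + 1)‖) := by
        refine hsum_t.congr fun k => ?_
        have hΓ : 0 < Real.Gamma (E0 + α * k + 1) :=
          gamma_pos_arg' α E0 hα0.le (by linarith) k
        have htp : 0 < t ^ (E0 + α * k) := Real.rpow_pos_of_pos htt.1 _
        rw [Real.norm_eq_abs, abs_div, abs_mul, abs_of_pos htp, abs_of_pos hΓ]
      calc ‖g t‖ ≤ ∑' k : ℕ, ‖a (m+1+k) * t ^ (E0 + α * k) /
            Real.Gamma (E0 + α * k + 1)‖ := norm_tsum_le_tsum_norm hn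
        _ ≤ ∑' k : ℕ, t ^ E0 * (|a (m+1+k)| * (1:ℝ) ^ (E0 + α * k) /
            Real.Gamma (E0 + α * k + 1)) := by
            refine Summable.tsum_le_tsum (fun k => ?_) hn (hMsum.mul_left _)
            have hΓ : 0 < Real.Gamma (E0 + α * k + 1) :=
              gamma_pos_arg' α E0 hα0.le (by linarith) k
            have htp : 0 < t ^ (E0 + α * k) := Real.rpow_pos_of_pos htt.1 _
            rw [Real.norm_eq_abs, abs_div, abs_mul, abs_of_pos htp, abs_of_pos hΓ,
              Real.one_rpow]
            have hsplit : t ^ (E0 + α * k) ≤ t ^ E0 := by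
              apply Real.rpow_le_rpow_of_exponent_ge htt.1 htt.2
              have : (0:ℝ) ≤ α * k := by positivity
              linarith
            rw [div_le_iff₀ hΓ]
            have heq : t ^ E0 * (|a (m+1+k)| * 1 / Real.Gamma (E0 + α * k + 1)) *
                Real.Gamma (E0 + α * k + 1) = t ^ E0 * |a (m+1+k)| := by
              field_simp
            rw [heq]
            calc |a (m+1+k)| * t ^ (E0 + α * k) ≤ |a (m+1+k)| * t ^ E0 :=
                mul_le_mul_of_nonneg_left hsplit (abs_nonneg _)
              _ = t ^ E0 * |a (m+1+k)| := mul_comm _ _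
        _ = t ^ E0 * M := by rw [hM_def, tsum_mul_left]
    have hlim : Tendsto (fun t : ℝ => t ^ E0 * M) (nhdsWithin 0 (Ioi 0)) (nhds 0) := by
      have h1 : Tendsto (fun t : ℝ => t ^ E0) (nhdsWithin 0 (Ioi 0)) (nhds 0) := by
        have hc : ContinuousAt (fun t : ℝ => t ^ E0) 0 :=
          Real.continuousAt_rpow_const 0 E0 (Or.inr hE0pos.le)
        have h2 : Tendsto (fun t : ℝ => t ^ E0) (nhdsWithin 0 (Ioi 0)) (nhds ((0:ℝ) ^ E0)) :=
          hc.tendsto.mono_left (nhdsWithin_le_nhds (s := Ioi 0))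
        rwa [Real.zero_rpow hE0pos.ne'] at h2
      simpa using h1.mul_const M
    refine squeeze_zero_norm' ?_ hlim
    filter_upwards [Ioc_mem_nhdsGT_of_mem (by constructor <;> norm_num : (0:ℝ) ∈ Ico (0:ℝ) 1)]
      with t htt
    exact hbound t htt
  · -- main equation
    intro t ht
    -- identify second caputo derivative
    have H3 : caputoDeriv α (caputoDeriv α z) t = caputoDeriv α g t := by
      show (1 / Real.Gamma (1 - α)) * ∫ ξ in (0:ℝ)..t, (t - ξ) ^ (-α) *
          deriv (caputoDeriv α z) ξ = (1 / Real.Gamma (1 - α)) *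
          ∫ ξ in (0:ℝ)..t, (t - ξ) ^ (-α) * deriv g ξ
      congr 1
      rw [intervalIntegral.integral_of_le ht.le, intervalIntegral.integral_of_le ht.le]
      refine setIntegral_congr_fun measurableSet_Ioc fun ξ hξ => ?_
      have hder : deriv (caputoDeriv α z) ξ = deriv g ξ := by
        apply Filter.EventuallyEq.deriv_eq
        exact Filter.eventuallyEq_of_mem (Ioi_mem_nhds hξ.1) fun s hs => H1 s hs
      rw [hder]
    -- the shifted power functions
    set w : ℕ → ℝ := fun j => t ^ ((E0 - α) + α * j) /
      Real.Gamma ((E0 - α) + α * j + 1) with hw_def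
    have hEm : (0:ℝ) ≤ E0 - α := by linarith
    -- summability of the three series
    have hs1 : Summable (fun k : ℕ => a (m+1+k) * w k) := by
      refine (summable_pow_aux α (E0 - α) hα0 hEm _ A hA t ht).congr fun k => ?_
      simp only [hw_def, mul_div_assoc]
    have hs2 : Summable (fun k : ℕ => a (m+1+k) * w (k+1)) := by
      refine (summable_pow_aux α E0 hα0 (by linarith) _ A hA t ht).congr fun k => ?_
      simp only [hw_def]
      push_cast
      rw [show (E0 - α) + α * ((k:ℝ) + 1) = E0 + α * (k:ℝ) by ring, mul_div_assoc]
    have hs3 : Summable (fun k : ℕ => a (m+1+k) * w (k+2)) := by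
      refine (summable_pow_aux α (E0 + α) hα0 (by linarith) _ A hA t ht).congr fun k => ?_
      simp only [hw_def]
      push_cast
      rw [show (E0 - α) + α * ((k:ℝ) + 2) = (E0 + α) + α * (k:ℝ) by ring, mul_div_assoc]
    have hs4 : Summable (fun k : ℕ => a (m+2+k) * w (k+1)) := by
      refine ((summable_nat_add_iff 1).mpr hs1).congr fun k => ?_
      rw [show m+1+(k+1) = m+2+k by omega]
    have hs5 : Summable (fun k : ℕ => a (m+2+k) * w (k+2)) := by
      refine ((summable_nat_add_iff 1).mpr hs2).congr fun k => ?_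
      rw [show m+1+(k+1) = m+2+k by omega]
    -- peeling
    have t1 : ∑' k : ℕ, a (m+1+k) * w k = a (m+1) * w 0 +
        ∑' k : ℕ, a (m+2+k) * w (k+1) := by
      rw [Summable.tsum_eq_zero_add hs1]
      have hre : ∑' k : ℕ, a (m+1+(k+1)) * w (k+1) = ∑' k : ℕ, a (m+2+k) * w (k+1) :=
        tsum_congr fun k => by rw [show m+1+(k+1) = m+2+k by omega]
      rw [hre]
    have t2 : ∑' k : ℕ, a (m+2+k) * w (k+1) = a (m+2) * w 1 +
        ∑' k : ℕ, a (m+3+k) * w (k+2) := by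
      rw [Summable.tsum_eq_zero_add hs4]
      have hre : ∑' k : ℕ, a (m+2+(k+1)) * w (k+2) = ∑' k : ℕ, a (m+3+k) * w (k+2) :=
        tsum_congr fun k => by rw [show m+2+(k+1) = m+3+k by omega]
      rw [hre]
    have t3 : ∑' k : ℕ, a (m+1+k) * w (k+1) = a (m+1) * w 1 +
        ∑' k : ℕ, a (m+2+k) * w (k+2) := by
      rw [Summable.tsum_eq_zero_add hs2]
      have hre : ∑' k : ℕ, a (m+1+(k+1)) * w (k+2) = ∑' k : ℕ, a (m+2+k) * w (k+2) :=
        tsum_congr fun k => by rw [show m+1+(k+1) = m+2+k by omega]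
      rw [hre]
    have tcancel : ∑' k : ℕ, a (m+3+k) * w (k+2) =
        -3 * ∑' k : ℕ, a (m+2+k) * w (k+2) - 2 * ∑' k : ℕ, a (m+1+k) * w (k+2) := by
      rw [← tsum_mul_left, ← tsum_mul_left, ← Summable.tsum_sub (hs5.mul_left _) (hs3.mul_left _)]
      refine tsum_congr fun k => ?_
      have hrec : a (m+3+k) = -3 * a (m+2+k) - 2 * a (m+1+k) := by
        have h := harec (m+1+k)
        rw [show m+1+k+2 = m+3+k by omega, show m+1+k+1 = m+2+k by omega] at h
        exact h
      rw [hrec]; ring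
    -- identify the three terms of the equation
    have hz_t : z t = ∑' k : ℕ, a (m+1+k) * w (k+2) := by
      rw [hz t]
      refine tsum_congr fun k => ?_
      simp only [hw_def]
      push_cast
      rw [show (E0 - α) + α * ((k:ℝ) + 2) = α * ((m:ℝ) + 1 + (k:ℝ)) by
        rw [hE0_def]; ring, mul_div_assoc]
    have hg_t : g t = ∑' k : ℕ, a (m+1+k) * w (k+1) := by
      rw [hg_def]
      refine tsum_congr fun k => ?_
      simp only [hw_def]
      push_cast
      rw [show (E0 - α) + α * ((k:ℝ) + 1) = E0 + α * (k:ℝ) by ring, mul_div_assoc]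
    have hcc : caputoDeriv α g t = ∑' k : ℕ, a (m+1+k) * w k := by
      rw [H2 t ht]
      exact tsum_congr fun k => by simp only [hw_def, mul_div_assoc]
    -- coefficient identities
    have ham1 : a (m+1) = -(2 * a (m-1) + 3 * a m) := by
      obtain ⟨n, hn⟩ : ∃ n, m = n + 1 := ⟨m - 1, by omega⟩
      subst hn
      have h := harec n
      rw [show n+1+1 = n+2 by omega, show n+1-1 = n by omega]
      linarith
    have ham2 : a (m+2) + 3 * a (m+1) = -2 * a m := by
      have h := harec m
      rw [show m+2 = m+1+1 by omega] at *
      linarith [harec m]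
    -- final computation
    rw [H3, hcc, H1 t ht, hg_t, hz_t, hF t, t1, t2, t3, tcancel]
    have hw0 : -(2 * a (m-1) + 3 * a m) * t ^ (α * ((m:ℝ) - 1)) /
        Real.Gamma (α * ((m:ℝ) - 1) + 1) = a (m+1) * w 0 := by
      rw [show α * ((m:ℝ) - 1) = (E0 - α) + α * ((0:ℕ):ℝ) by
        push_cast; rw [hE0_def]; ring, ham1]
      simp only [hw_def]
      ring
    have hw1 : 2 * a m * t ^ (α * (m:ℝ)) / Real.Gamma (α * (m:ℝ) + 1) =
        -((a (m+2) + 3 * a (m+1)) * w 1) := by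
      rw [show α * ((m:ℝ)) = (E0 - α) + α * ((1:ℕ):ℝ) by
        push_cast; rw [hE0_def]; ring, ham2]
      simp only [hw_def]
      ring
    rw [hw0]
    rw [show (2:ℝ) * a m * t ^ E0 / Real.Gamma (E0 + 1) =
      -((a (m+2) + 3 * a (m+1)) * w 1) from by rw [hE0_def] at *; exact hw1]
    ring
end

section
/- Let 0 < α < 1, B > 0, T > 0 and let m be a positive integer with mα > 2. Then the function z(t) = ∑_{n=m+1}^∞ (−B)^n t^{αn} / Γ(αn + 1) satisfies z(0) = 0, lim_{t→0⁺} z'(t) = 0 and lim_{t→0⁺} z''(t) = 0, where z' and z'' denote its first and second derivatives on (0,T]. -/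
open Real Filter Set

private lemma gamma_convex_bound {α : ℝ} (hα0 : 0 < α) (hα1 : α < 1) {y : ℝ} (hy : 0 < y) :
    Real.Gamma (y + 1) ≤ Real.Gamma (y + α) * (y + α) ^ (1 - α) := by
  have hyα : (0:ℝ) < y + α := by linarith
  have hΓ1 : 0 < Real.Gamma (y + α) := Real.Gamma_pos_of_pos hyα
  have hΓ3 : 0 < Real.Gamma (y + 1) := Real.Gamma_pos_of_pos (by linarith)
  have hc := Real.convexOn_log_Gamma.2 (Set.mem_Ioi.2 hyα)
      (Set.mem_Ioi.2 (show (0:ℝ) < y + α + 1 by linarith)) hα0.le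
      (by linarith : (0:ℝ) ≤ 1 - α) (by ring)
  rw [smul_eq_mul, smul_eq_mul, smul_eq_mul, smul_eq_mul,
    (by ring : α * (y + α) + (1 - α) * (y + α + 1) = y + 1)] at hc
  simp only [Function.comp_apply] at hc
  rw [Real.Gamma_add_one hyα.ne', Real.log_mul hyα.ne' hΓ1.ne'] at hc
  have h2 : Real.log (Real.Gamma (y+1)) ≤ Real.log (Real.Gamma (y+α) * (y+α)^(1-α)) := by
    rw [Real.log_mul hΓ1.ne' (Real.rpow_pos_of_pos hyα _).ne', Real.log_rpow hyα]
    linarith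
  exact (Real.log_le_log_iff hΓ3 (by positivity)).1 h2

/-- Quantitative consequence: for `y ≥ 1` with `y ^ α ≥ 16 B`, `Γ(y+α) ≥ 8 B Γ(y)`. -/
private lemma gamma_ratio_big {α B : ℝ} (hα0 : 0 < α) (hα1 : α < 1) (hB : 0 < B)
    {y : ℝ} (hy1 : 1 ≤ y) (h16 : 16 * B ≤ y ^ α) :
    8 * B * Real.Gamma y ≤ Real.Gamma (y + α) := by
  have hy0 : (0:ℝ) < y := by linarith
  have hΓy : 0 < Real.Gamma y := Real.Gamma_pos_of_pos hy0
  have hΓya : 0 < Real.Gamma (y + α) := Real.Gamma_pos_of_pos (by linarith)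
  have ht : (0:ℝ) < y ^ (1 - α) := Real.rpow_pos_of_pos hy0 _
  have key := gamma_convex_bound hα0 hα1 hy0
  rw [Real.Gamma_add_one hy0.ne'] at key
  -- key : y * Γ y ≤ Γ (y+α) * (y+α)^(1-α)
  have h2y : (y + α) ^ (1 - α) ≤ 2 * y ^ (1 - α) := by
    calc (y + α) ^ (1 - α) ≤ (2 * y) ^ (1 - α) :=
          Real.rpow_le_rpow (by linarith) (by linarith) (by linarith)
      _ = 2 ^ (1 - α) * y ^ (1 - α) := Real.mul_rpow (by norm_num) hy0.le
      _ ≤ 2 * y ^ (1 - α) := by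
          have : (2:ℝ) ^ (1 - α) ≤ 2 ^ (1:ℝ) :=
            Real.rpow_le_rpow_of_exponent_le (by norm_num) (by linarith)
          rw [Real.rpow_one] at this
          nlinarith
  have hGam : y * Real.Gamma y ≤ Real.Gamma (y + α) * (2 * y ^ (1 - α)) :=
    key.trans (by nlinarith)
  have hyid : y = y ^ α * y ^ (1 - α) := by
    rw [← Real.rpow_add hy0, (by ring : α + (1 - α) = (1:ℝ)), Real.rpow_one]
  have h5 : y ^ α * Real.Gamma y ≤ 2 * Real.Gamma (y + α) := by
    rw [hyid] at hGam
    have := hGam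
    have h6 : (y ^ α * Real.Gamma y) * y ^ (1 - α) ≤ (2 * Real.Gamma (y + α)) * y ^ (1 - α) := by
      nlinarith
    exact le_of_mul_le_mul_right h6 ht
  nlinarith [mul_le_mul_of_nonneg_right h16 hΓy.le]

private lemma summable_aux {α B : ℝ} (m : ℕ) (hα0 : 0 < α) (hα1 : α < 1) (hB : 0 < B) :
    Summable (fun n : ℕ => (α * ((m:ℝ)+1+n))^2 * B ^ (m+1+n) /
      Real.Gamma (α * ((m:ℝ)+1+n) + 1)) := by
  apply summable_of_ratio_norm_eventually_le (r := 1/2) (by norm_num)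
  have hev : ∀ᶠ n : ℕ in atTop, max 1 ((16*B) ^ (α⁻¹)) ≤ α * ((m:ℝ)+1+n) + 1 := by
    rw [Filter.eventually_atTop]
    refine ⟨⌈max 1 ((16*B) ^ (α⁻¹)) / α⌉₊, fun n hn => ?_⟩
    have h1 : max 1 ((16*B)^(α⁻¹)) / α ≤ (n:ℝ) :=
      le_trans (Nat.le_ceil _) (Nat.cast_le.2 hn)
    have h2 := (div_le_iff₀ hα0).1 h1
    have h3 : (0:ℝ) ≤ (m:ℝ) := Nat.cast_nonneg m
    nlinarith
  filter_upwards [hev] with n hyM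
  set e : ℝ := α * ((m:ℝ)+1+n) with he_def
  have he : 0 < e := mul_pos hα0 (by positivity)
  set y : ℝ := e + 1 with hy_def
  have hy1 : 1 ≤ y := by simp [hy_def]; linarith
  have hyM' : max 1 ((16*B) ^ (α⁻¹)) ≤ y := hyM
  have h16 : 16 * B ≤ y ^ α := by
    calc 16 * B = ((16*B) ^ (α⁻¹)) ^ α := (Real.rpow_inv_rpow (by positivity) hα0.ne').symm
      _ ≤ y ^ α := Real.rpow_le_rpow (by positivity) (le_trans (le_max_right _ _) hyM') hα0.le
  have h8 := gamma_ratio_big hα0 hα1 hB hy1 h16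
  have hΓy : 0 < Real.Gamma y := Real.Gamma_pos_of_pos (by linarith)
  have hΓya : 0 < Real.Gamma (y + α) := Real.Gamma_pos_of_pos (by linarith)
  have hcast : α * ((m:ℝ)+1+((n+1:ℕ):ℝ)) = e + α := by push_cast [he_def]; ring
  have hcast1 : α * ((m:ℝ)+1+((n+1:ℕ):ℝ)) + 1 = y + α := by rw [hcast, hy_def]; ring
  have hk : m + 1 + (n + 1) = (m + 1 + n) + 1 := by omega
  have hBk : (0:ℝ) < B ^ (m+1+n) := pow_pos hB _
  have hea : 0 < e + α := by linarith
  rw [Real.norm_eq_abs, Real.norm_eq_abs, hk, hcast,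
    show e + α + 1 = y + α from by rw [hy_def]; ring,
    abs_of_pos (by positivity), abs_of_pos (by positivity)]
  rw [show (1:ℝ)/2 * (e^2 * B^(m+1+n) / Real.Gamma y) =
      (1/2 * (e^2 * B^(m+1+n))) / Real.Gamma y from by ring]
  apply (div_le_div_iff₀ hΓya hΓy).2
  have hαe : α ≤ e := by
    rw [he_def]
    nlinarith [Nat.cast_nonneg (α := ℝ) m, Nat.cast_nonneg (α := ℝ) n]
  have hsq : (e+α)^2 ≤ 4 * e^2 := by nlinarith
  rw [pow_succ B (m+1+n)]
  nlinarith [mul_le_mul_of_nonneg_right hsq (by positivity : (0:ℝ) ≤ B^(m+1+n) * B * Real.Gamma y),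
    mul_le_mul_of_nonneg_left h8 (by positivity : (0:ℝ) ≤ e^2 * B^(m+1+n))]

private lemma monomial_tsum_hasDerivAt (c p u : ℕ → ℝ) (hu : Summable u)
    (hp1 : ∀ n, 1 ≤ p n) (hb : ∀ n, |c n| * p n ≤ u n) {x : ℝ}
    (hx : x ∈ Set.Ioo (-1:ℝ) 1) :
    HasDerivAt (fun t => ∑' n, c n * t ^ p n)
      (∑' n, (c n * p n) * x ^ (p n - 1)) x := by
  have hg : ∀ (n : ℕ) (y : ℝ), y ∈ Set.Ioo (-1:ℝ) 1 →
      HasDerivAt (fun t => c n * t ^ p n) ((c n * p n) * y ^ (p n - 1)) y := by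
    intro n y _
    have h := (Real.hasDerivAt_rpow_const (x := y) (p := p n) (Or.inr (hp1 n))).const_mul (c n)
    rw [mul_assoc]
    exact h
  have hg' : ∀ (n : ℕ) (y : ℝ), y ∈ Set.Ioo (-1:ℝ) 1 →
      ‖(c n * p n) * y ^ (p n - 1)‖ ≤ u n := by
    intro n y hy
    have habs : |y| ≤ 1 := (abs_lt.2 ⟨hy.1, hy.2⟩).le
    have h1 : |y ^ (p n - 1)| ≤ 1 :=
      (Real.abs_rpow_le_abs_rpow y (p n - 1)).trans
        (Real.rpow_le_one (abs_nonneg y) habs (by linarith [hp1 n]))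
    have hpn : 0 < p n := lt_of_lt_of_le zero_lt_one (hp1 n)
    calc ‖(c n * p n) * y ^ (p n - 1)‖ = |c n| * p n * |y ^ (p n - 1)| := by
          rw [Real.norm_eq_abs, abs_mul, abs_mul, abs_of_pos hpn]
      _ ≤ |c n| * p n * 1 := by
          apply mul_le_mul_of_nonneg_left h1 (by positivity)
      _ ≤ u n := by rw [mul_one]; exact hb n
  have hg0 : Summable (fun n => c n * (0:ℝ) ^ p n) := by
    apply summable_zero.congr
    intro n
    rw [Real.zero_rpow (by linarith [hp1 n] : p n ≠ 0), mul_zero]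
  exact hasDerivAt_tsum_of_isPreconnected hu isOpen_Ioo
    (convex_Ioo (-1:ℝ) 1).isPreconnected hg hg'
    (show (0:ℝ) ∈ Set.Ioo (-1:ℝ) 1 by norm_num) hg0 hx

private lemma monomial_tsum_tendsto (c p u : ℕ → ℝ) (hu : Summable u)
    (hp0 : ∀ n, 0 < p n) (hb : ∀ n, |c n| ≤ u n) :
    Filter.Tendsto (fun x => ∑' n, c n * x ^ p n) (nhdsWithin 0 (Set.Ioi 0)) (nhds 0) := by
  have hab : ∀ n : ℕ, Filter.Tendsto (fun x : ℝ => c n * x ^ p n)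
      (nhdsWithin 0 (Set.Ioi 0)) (nhds 0) := by
    intro n
    have hc : ContinuousAt (fun x : ℝ => c n * x ^ p n) 0 :=
      continuousAt_const.mul (Real.continuousAt_rpow_const 0 (p n) (Or.inr (hp0 n).le))
    have := hc.tendsto.mono_left (nhdsWithin_le_nhds (s := Set.Ioi (0:ℝ)))
    rwa [Real.zero_rpow (hp0 n).ne', mul_zero] at this
  have hbound : ∀ᶠ x : ℝ in nhdsWithin 0 (Set.Ioi 0), ∀ n, ‖c n * x ^ p n‖ ≤ u n := by
    filter_upwards [Ioo_mem_nhdsGT_of_mem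
      (show (0:ℝ) ∈ Set.Ico (0:ℝ) 1 by norm_num)] with x hx n
    have h1 : x ^ p n ≤ 1 := Real.rpow_le_one hx.1.le hx.2.le (hp0 n).le
    have h0 : 0 ≤ x ^ p n := Real.rpow_nonneg hx.1.le _
    calc ‖c n * x ^ p n‖ = |c n| * |x ^ p n| := by rw [Real.norm_eq_abs, abs_mul]
      _ ≤ |c n| * 1 := mul_le_mul_of_nonneg_left (by rw [abs_of_nonneg h0]; exact h1)
          (abs_nonneg _)
      _ ≤ u n := by rw [mul_one]; exact hb n
  have h := tendsto_tsum_of_dominated_convergence (𝓕 := nhdsWithin (0:ℝ) (Set.Ioi 0))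
      (f := fun (x : ℝ) (n : ℕ) => c n * x ^ p n) (g := fun _ => (0:ℝ)) hu hab hbound
  simpa [tsum_zero] using h

/-- For `mα > 2`, the tail `z(t) = ∑_{n=m+1}^∞ (−B)^n t^{αn}/Γ(αn+1)` satisfies
`z(0) = 0`, `z'(t) → 0` and `z''(t) → 0` as `t → 0⁺`, where `z'` and `z''` are its first
and second derivatives on `(0,T]`. -/
theorem tail_derivatives_vanish_at_zero (α B T : ℝ) (m : ℕ)
    (hα0 : 0 < α) (hα1 : α < 1) (hB : 0 < B) (hT : 0 < T)
    (hm : 0 < m) (hmα : 2 < m * α)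
    (z : ℝ → ℝ)
    (hz : ∀ t : ℝ, z t = ∑' n : ℕ,
      (-B) ^ (m + 1 + n) * t ^ (α * ((m : ℝ) + 1 + n)) /
        Real.Gamma (α * ((m : ℝ) + 1 + n) + 1)) :
    z 0 = 0 ∧
    Filter.Tendsto (fun t => deriv z t) (nhdsWithin 0 (Set.Ioi 0)) (nhds 0) ∧
    Filter.Tendsto (fun t => deriv (deriv z) t) (nhdsWithin 0 (Set.Ioi 0)) (nhds 0) := by

  have hΓpos : ∀ n : ℕ, 0 < Real.Gamma (α * ((m : ℝ) + 1 + n) + 1) := by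
    intro n
    apply Real.Gamma_pos_of_pos
    have : 0 < α * ((m:ℝ) + 1 + n) := mul_pos hα0 (by positivity)
    linarith
  have hp2 : ∀ n : ℕ, 2 < α * ((m : ℝ) + 1 + n) := by
    intro n
    have h2 : (0:ℝ) ≤ (n:ℝ) := Nat.cast_nonneg n
    nlinarith
  have habs : ∀ n : ℕ, |(-B) ^ (m+1+n) / Real.Gamma (α * ((m:ℝ)+1+n) + 1)|
      = B ^ (m+1+n) / Real.Gamma (α * ((m:ℝ)+1+n) + 1) := by
    intro n
    rw [abs_div, abs_pow, abs_neg, abs_of_pos hB, abs_of_pos (hΓpos n)]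
  have hu : Summable (fun n : ℕ => (α * ((m:ℝ)+1+n))^2 * B ^ (m+1+n) /
      Real.Gamma (α * ((m:ℝ)+1+n) + 1)) := summable_aux m hα0 hα1 hB
  -- the master bound
  have key : ∀ (n : ℕ) (q : ℝ), 0 ≤ q → q ≤ (α * ((m:ℝ)+1+n))^2 →
      |(-B) ^ (m+1+n) / Real.Gamma (α * ((m:ℝ)+1+n) + 1)| * q ≤
      (α * ((m:ℝ)+1+n))^2 * B ^ (m+1+n) / Real.Gamma (α * ((m:ℝ)+1+n) + 1) := by
    intro n q hq0 hq
    rw [habs n, div_mul_eq_mul_div]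
    apply div_le_div_of_nonneg_right (c := Real.Gamma (α * ((m:ℝ)+1+n) + 1)) ?_ (hΓpos n).le
    nlinarith [pow_pos hB (m+1+n)]
  -- rewrite z as a clean monomial sum
  have hz' : z = fun t => ∑' n : ℕ,
      ((-B) ^ (m+1+n) / Real.Gamma (α * ((m:ℝ)+1+n) + 1)) * t ^ (α * ((m:ℝ)+1+n)) := by
    funext t
    rw [hz t]
    exact tsum_congr fun n => by ring
  -- the three summable bounds
  have hb1 : ∀ n : ℕ, |(-B) ^ (m+1+n) / Real.Gamma (α * ((m:ℝ)+1+n) + 1)| *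
      (α * ((m:ℝ)+1+n)) ≤ (α * ((m:ℝ)+1+n))^2 * B ^ (m+1+n) /
      Real.Gamma (α * ((m:ℝ)+1+n) + 1) := by
    intro n
    exact key n _ (by nlinarith [hp2 n]) (by nlinarith [hp2 n])
  have hb2 : ∀ n : ℕ, |((-B) ^ (m+1+n) / Real.Gamma (α * ((m:ℝ)+1+n) + 1)) *
      (α * ((m:ℝ)+1+n))| ≤ (α * ((m:ℝ)+1+n))^2 * B ^ (m+1+n) /
      Real.Gamma (α * ((m:ℝ)+1+n) + 1) := by
    intro n
    rw [abs_mul, abs_of_pos (by nlinarith [hp2 n] : 0 < α * ((m:ℝ)+1+n))]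
    exact hb1 n
  have hb3 : ∀ n : ℕ, |((-B) ^ (m+1+n) / Real.Gamma (α * ((m:ℝ)+1+n) + 1)) *
      (α * ((m:ℝ)+1+n))| * (α * ((m:ℝ)+1+n) - 1) ≤
      (α * ((m:ℝ)+1+n))^2 * B ^ (m+1+n) / Real.Gamma (α * ((m:ℝ)+1+n) + 1) := by
    intro n
    rw [abs_mul, abs_of_pos (by nlinarith [hp2 n] : 0 < α * ((m:ℝ)+1+n)), mul_assoc]
    exact key n _ (by nlinarith [hp2 n]) (by nlinarith [hp2 n])
  have hb4 : ∀ n : ℕ, |(((-B) ^ (m+1+n) / Real.Gamma (α * ((m:ℝ)+1+n) + 1)) *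
      (α * ((m:ℝ)+1+n))) * (α * ((m:ℝ)+1+n) - 1)| ≤
      (α * ((m:ℝ)+1+n))^2 * B ^ (m+1+n) / Real.Gamma (α * ((m:ℝ)+1+n) + 1) := by
    intro n
    rw [abs_mul, abs_of_pos (by nlinarith [hp2 n] : (0:ℝ) < α * ((m:ℝ)+1+n) - 1)]
    exact hb3 n
  -- first derivative on Ioo (-1) 1
  have hD1deriv : ∀ x ∈ Set.Ioo (-1:ℝ) 1, HasDerivAt z
      (∑' n : ℕ, (((-B) ^ (m+1+n) / Real.Gamma (α * ((m:ℝ)+1+n) + 1)) *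
        (α * ((m:ℝ)+1+n))) * x ^ (α * ((m:ℝ)+1+n) - 1)) x := by
    intro x hx
    rw [hz']
    exact monomial_tsum_hasDerivAt _ _ _ hu (fun n => by linarith [hp2 n]) hb1 hx
  have hderiv1 : ∀ x ∈ Set.Ioo (-1:ℝ) 1, deriv z x =
      ∑' n : ℕ, (((-B) ^ (m+1+n) / Real.Gamma (α * ((m:ℝ)+1+n) + 1)) *
        (α * ((m:ℝ)+1+n))) * x ^ (α * ((m:ℝ)+1+n) - 1) :=
    fun x hx => (hD1deriv x hx).deriv
  -- second derivative of the derivative series on Ioo (-1) 1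
  have hD2deriv : ∀ x ∈ Set.Ioo (-1:ℝ) 1, HasDerivAt
      (fun t => ∑' n : ℕ, (((-B) ^ (m+1+n) / Real.Gamma (α * ((m:ℝ)+1+n) + 1)) *
        (α * ((m:ℝ)+1+n))) * t ^ (α * ((m:ℝ)+1+n) - 1))
      (∑' n : ℕ, ((((-B) ^ (m+1+n) / Real.Gamma (α * ((m:ℝ)+1+n) + 1)) *
        (α * ((m:ℝ)+1+n))) * (α * ((m:ℝ)+1+n) - 1)) * x ^ (α * ((m:ℝ)+1+n) - 1 - 1)) x :=
    fun x hx => monomial_tsum_hasDerivAt _ _ _ hu (fun n => by linarith [hp2 n]) hb3 hx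
  have hIoo : Set.Ioo (0:ℝ) 1 ∈ nhdsWithin (0:ℝ) (Set.Ioi 0) :=
    Ioo_mem_nhdsGT_of_mem (show (0:ℝ) ∈ Set.Ico (0:ℝ) 1 by norm_num)
  have hsub : ∀ x : ℝ, x ∈ Set.Ioo (0:ℝ) 1 → x ∈ Set.Ioo (-1:ℝ) 1 :=
    fun x hx => ⟨by linarith [hx.1], hx.2⟩
  refine ⟨?_, ?_, ?_⟩
  · rw [hz 0]
    have h0 : ∀ n : ℕ, (-B) ^ (m+1+n) * (0:ℝ) ^ (α * ((m:ℝ)+1+n)) /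
        Real.Gamma (α * ((m:ℝ)+1+n) + 1) = 0 := by
      intro n
      rw [Real.zero_rpow (by linarith [hp2 n] : α * ((m:ℝ)+1+n) ≠ 0), mul_zero, zero_div]
    rw [tsum_congr h0, tsum_zero]
  · have hT1 := monomial_tsum_tendsto
      (fun n => ((-B) ^ (m+1+n) / Real.Gamma (α * ((m:ℝ)+1+n) + 1)) * (α * ((m:ℝ)+1+n)))
      (fun n => α * ((m:ℝ)+1+n) - 1) _ hu
      (fun n => show (0:ℝ) < α * ((m:ℝ)+1+n) - 1 by linarith [hp2 n]) hb2
    apply hT1.congr'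
    filter_upwards [hIoo] with x hx
    exact (hderiv1 x (hsub x hx)).symm
  · have hT2 := monomial_tsum_tendsto
      (fun n => (((-B) ^ (m+1+n) / Real.Gamma (α * ((m:ℝ)+1+n) + 1)) *
        (α * ((m:ℝ)+1+n))) * (α * ((m:ℝ)+1+n) - 1))
      (fun n => α * ((m:ℝ)+1+n) - 1 - 1) _ hu
      (fun n => show (0:ℝ) < α * ((m:ℝ)+1+n) - 1 - 1 by linarith [hp2 n]) hb4
    apply hT2.congr'
    filter_upwards [hIoo] with x hx
    have hx' := hsub x hx
    have heq : deriv z =ᶠ[nhds x] (fun t => ∑' n : ℕ,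
        (((-B) ^ (m+1+n) / Real.Gamma (α * ((m:ℝ)+1+n) + 1)) *
        (α * ((m:ℝ)+1+n))) * t ^ (α * ((m:ℝ)+1+n) - 1)) := by
      filter_upwards [isOpen_Ioo.mem_nhds hx'] with y hy
      exact hderiv1 y hy
    rw [heq.deriv_eq, (hD2deriv x hx').deriv]
end
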